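/- The function f(t) = ∑_{k≥0} 2^{-k/2} e^{i 2^k t} on 𝕋 satisfies the Lipschitz condition of order 1/2 (there is a constant C with |f(t₁)−f(t₂)| ≤ C·d(t₁,t₂)^{1/2} for all t₁,t₂ ∈ 𝕋) but does not belong to W_2^{1/2}(𝕋). In particular, Lip_{1/2}(𝕋) is not contained in W_2^{1/2}(𝕋). -/

import Mathlib

open Real MeasureTheory

noncomputable section

instance : Fact (0 < 2 * Real.pi) := ⟨by positivity⟩

/-- The lacunary series `f(t) = ∑_{k≥0} 2^{-k/2} e^{i 2^k t}` on the circle `𝕋 = ℝ/2πℤ`. -/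
def lacunaryHalf : AddCircle (2 * Real.pi) → ℂ :=
  fun t => ∑' k : ℕ, (((2 : ℝ) ^ (-(k : ℝ) / 2) : ℝ) : ℂ) * fourier ((2 : ℤ) ^ k) t

lemma aux1 (θ : ℝ) : ‖Complex.exp (θ * Complex.I) - 1‖ ≤ |θ| := by
  have h2 : ‖Complex.exp (θ * Complex.I) - 1‖ ^ 2 ≤ |θ| ^ 2 := by
    have : Complex.exp (θ * Complex.I) - 1
        = ((Real.cos θ - 1 : ℝ) : ℂ) + ((Real.sin θ : ℝ) : ℂ) * Complex.I := by
      rw [Complex.exp_mul_I]; push_cast; ring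
    rw [this]
    rw [Complex.sq_norm, Complex.normSq_add_mul_I]
    have hc := Real.one_sub_sq_div_two_le_cos (x := θ)
    have hsc := Real.sin_sq_add_cos_sq θ
    have := Real.neg_one_le_cos θ
    rw [sq_abs]
    nlinarith
  exact (pow_le_pow_iff_left₀ (norm_nonneg _) (abs_nonneg _) two_ne_zero).mp h2

lemma fourier_lip (n : ℤ) (x y : AddCircle (2 * Real.pi)) :
    ‖fourier n x - fourier n y‖ ≤ |(n : ℝ)| * dist x y := by
  induction x using QuotientAddGroup.induction_on with | H a =>
  induction y using QuotientAddGroup.induction_on with | H b =>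
  set p : ℝ := 2 * Real.pi with hp
  have hp0 : 0 < p := by positivity
  set c : ℝ := (a - b) - round (p⁻¹ * (a - b)) * p with hc
  have hdist : dist (a : AddCircle p) (b : AddCircle p) = |c| := by
    rw [dist_eq_norm, ← QuotientAddGroup.mk_sub, AddCircle.norm_eq]
  have hxy : (a : AddCircle p) = ((b + c : ℝ) : AddCircle p) := by
    rw [QuotientAddGroup.eq_iff_sub_mem]
    refine ⟨round (p⁻¹ * (a - b)), ?_⟩
    simp [hc, zsmul_eq_mul]
    ring
  rw [hdist, hxy]
  rw [fourier_coe_apply, fourier_coe_apply]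
  have key : Complex.exp (2 * Real.pi * Complex.I * n * (b + c) / (2 * Real.pi))
      - Complex.exp (2 * Real.pi * Complex.I * n * b / (2 * Real.pi))
      = Complex.exp (2 * Real.pi * Complex.I * n * b / (2 * Real.pi))
        * (Complex.exp (((n : ℝ) * c : ℝ) * Complex.I) - 1) := by
    rw [mul_sub, ← Complex.exp_add, mul_one]
    congr 1
    have hπ : (Real.pi : ℂ) ≠ 0 := by exact_mod_cast Real.pi_ne_zero
    push_cast
    field_simp
  simp only [hp]
  push_cast
  rw [key, norm_mul]
  have h1 : ‖Complex.exp (2 * Real.pi * Complex.I * n * b / (2 * Real.pi))‖ = 1 := by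
    rw [Complex.norm_exp]
    have hπ : (Real.pi : ℂ) ≠ 0 := by exact_mod_cast Real.pi_ne_zero
    have : (2 * Real.pi * Complex.I * n * b / (2 * Real.pi)) = ((n : ℝ) * b : ℝ) * Complex.I := by
      push_cast; field_simp
    rw [this]
    simp
  rw [h1, one_mul]
  calc ‖Complex.exp (((n : ℝ) * c : ℝ) * Complex.I) - 1‖ ≤ |(n : ℝ) * c| := aux1 _
    _ = |(n : ℝ)| * |c| := abs_mul _ _

lemma integral_fourier (n : ℤ) :
    ∫ t : AddCircle (2 * Real.pi), fourier n t ∂AddCircle.haarAddCircle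
      = if n = 0 then 1 else 0 := by
  split_ifs with h
  · subst h
    simp [fourier_zero]
  · exact integral_eq_zero_of_add_right_eq_neg
      (fourier_add_half_inv_index h (by positivity))

lemma fourierCoeff_fourier' (m n : ℤ) :
    fourierCoeff (⇑(fourier m) : AddCircle (2 * Real.pi) → ℂ) n
      = if m = n then 1 else 0 := by
  unfold fourierCoeff
  have : ∀ t : AddCircle (2 * Real.pi),
      fourier (-n) t • fourier m t = fourier (-n + m) t := by
    intro t
    rw [smul_eq_mul, mul_comm, ← fourier_add, add_comm]
  simp_rw [this]
  rw [integral_fourier]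
  simp [neg_add_eq_zero, eq_comm]

lemma c_eq (k : ℕ) : (2:ℝ)^(-(k:ℝ)/2) = ((2:ℝ)^(-(1:ℝ)/2))^k := by
  rw [← Real.rpow_natCast ((2:ℝ)^(-(1:ℝ)/2)) k, ← Real.rpow_mul (by norm_num)]
  congr 1
  push_cast
  ring

lemma r_lt_one : (2:ℝ)^(-(1:ℝ)/2) < 1 :=
  Real.rpow_lt_one_of_one_lt_of_neg one_lt_two (by norm_num)

lemma r_pos : 0 < (2:ℝ)^(-(1:ℝ)/2) := Real.rpow_pos_of_pos two_pos _

lemma r_nonneg : 0 ≤ (2:ℝ)^(-(1:ℝ)/2) := r_pos.le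

lemma summable_r : Summable (fun k : ℕ => ((2:ℝ)^(-(1:ℝ)/2))^k) :=
  summable_geometric_of_lt_one r_nonneg r_lt_one

lemma norm_term (k : ℕ) (t : AddCircle (2 * Real.pi)) :
    ‖(((2 : ℝ) ^ (-(k : ℝ) / 2) : ℝ) : ℂ) * fourier ((2 : ℤ) ^ k) t‖
      = ((2:ℝ)^(-(1:ℝ)/2))^k := by
  rw [norm_mul]
  have h1 : ‖(fourier ((2:ℤ) ^ k) t : ℂ)‖ = 1 := Circle.norm_coe _
  rw [h1, mul_one, Complex.norm_real, Real.norm_eq_abs,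
    abs_of_nonneg (Real.rpow_nonneg (by norm_num) _), c_eq]

lemma summable_term (t : AddCircle (2 * Real.pi)) :
    Summable (fun k : ℕ => (((2 : ℝ) ^ (-(k : ℝ) / 2) : ℝ) : ℂ) * fourier ((2 : ℤ) ^ k) t) := by
  apply Summable.of_norm
  simp_rw [norm_term]
  exact summable_r

lemma coeff_eq (n : ℤ) :
    fourierCoeff lacunaryHalf n
      = ∑' k : ℕ, (((2 : ℝ) ^ (-(k : ℝ) / 2) : ℝ) : ℂ)
          * fourierCoeff (⇑(fourier ((2:ℤ)^k)) : AddCircle (2 * Real.pi) → ℂ) n := by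
  unfold fourierCoeff lacunaryHalf
  have h1 : ∀ t : AddCircle (2 * Real.pi),
      fourier (-n) t • (∑' k : ℕ, (((2 : ℝ) ^ (-(k : ℝ) / 2) : ℝ) : ℂ) * fourier ((2 : ℤ) ^ k) t)
      = ∑' k : ℕ, fourier (-n) t • ((((2 : ℝ) ^ (-(k : ℝ) / 2) : ℝ) : ℂ) * fourier ((2 : ℤ) ^ k) t) := by
    intro t
    exact (Summable.tsum_mul_left _ (summable_term t)).symm
  simp_rw [h1]
  rw [integral_tsum]
  · congr 1
    ext k
    have : ∀ t : AddCircle (2 * Real.pi),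
        fourier (-n) t • ((((2 : ℝ) ^ (-(k : ℝ) / 2) : ℝ) : ℂ) * fourier ((2 : ℤ) ^ k) t)
        = (((2 : ℝ) ^ (-(k : ℝ) / 2) : ℝ) : ℂ) * (fourier (-n) t • fourier ((2 : ℤ) ^ k) t) := by
      intro t; simp [smul_eq_mul]; ring
    simp_rw [this]
    rw [integral_const_mul]
  · intro k
    exact Continuous.aestronglyMeasurable
      ((map_continuous (fourier (-n))).smul (continuous_const.mul (map_continuous (fourier _))))
  · have : ∀ k : ℕ, ∫⁻ t : AddCircle (2 * Real.pi),
        ‖fourier (-n) t • ((((2 : ℝ) ^ (-(k : ℝ) / 2) : ℝ) : ℂ) * fourier ((2 : ℤ) ^ k) t)‖ₑ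
          ∂AddCircle.haarAddCircle
        = ENNReal.ofReal (((2:ℝ)^(-(1:ℝ)/2))^k) := by
      intro k
      have : ∀ t : AddCircle (2 * Real.pi),
          (‖fourier (-n) t • ((((2 : ℝ) ^ (-(k : ℝ) / 2) : ℝ) : ℂ) * fourier ((2 : ℤ) ^ k) t)‖ₑ : ENNReal)
            = ENNReal.ofReal (((2:ℝ)^(-(1:ℝ)/2))^k) := by
        intro t
        rw [← ofReal_norm, norm_smul]
        congr 1
        have h1 : ‖(fourier (-n) t : ℂ)‖ = 1 := Circle.norm_coe _
        rw [h1, one_mul, norm_term]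
      simp_rw [this]
      simp
    simp_rw [this]
    rw [← ENNReal.ofReal_tsum_of_nonneg (fun k => pow_nonneg r_nonneg k) summable_r]
    exact ENNReal.ofReal_ne_top

lemma coeff_pow (j : ℕ) :
    fourierCoeff lacunaryHalf ((2:ℤ)^j) = (((2 : ℝ) ^ (-(j : ℝ) / 2) : ℝ) : ℂ) := by
  rw [coeff_eq]
  simp_rw [fourierCoeff_fourier']
  rw [tsum_eq_single j]
  · simp
  · intro k hk
    have : ((2:ℤ)^k = (2:ℤ)^j) = False := by
      simp only [eq_iff_iff, iff_false]
      intro h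
      apply hk
      have h2 : ((2:ℕ):ℤ)^k = ((2:ℕ):ℤ)^j := by exact_mod_cast h
      rw [← Nat.cast_pow, ← Nat.cast_pow, Nat.cast_inj] at h2
      exact Nat.pow_right_injective (by norm_num) h2
    simp [this]

lemma term_one (j : ℕ) :
    ‖fourierCoeff lacunaryHalf ((2:ℤ)^j)‖ ^ 2 * |(((2:ℤ)^j : ℤ) : ℝ)| = 1 := by
  rw [coeff_pow, Complex.norm_real, Real.norm_eq_abs,
    abs_of_nonneg (Real.rpow_nonneg (by norm_num) _)]
  have h1 : ((2:ℝ) ^ (-(j:ℝ)/2)) ^ 2 = (2:ℝ) ^ (-(j:ℝ)) := by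
    rw [← Real.rpow_natCast ((2:ℝ) ^ (-(j:ℝ)/2)) 2, ← Real.rpow_mul (by norm_num)]
    norm_num
  have h2 : |(((2:ℤ)^j : ℤ) : ℝ)| = (2:ℝ) ^ (j:ℝ) := by
    push_cast
    rw [abs_of_nonneg (by positivity), ← Real.rpow_natCast]
  rw [h1, h2, ← Real.rpow_add (by norm_num)]
  norm_num

lemma not_summable_lacunary :
    ¬ Summable (fun k : ℤ => ‖fourierCoeff lacunaryHalf k‖ ^ 2 * |(k : ℝ)|) := by
  intro h
  have h0 := h.tendsto_cofinite_zero
  have hinj : Function.Injective (fun j : ℕ => (2:ℤ)^j) := by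
    intro a b hab
    simp only at hab
    have h2 : ((2:ℕ):ℤ)^a = ((2:ℕ):ℤ)^b := by exact_mod_cast hab
    rw [← Nat.cast_pow, ← Nat.cast_pow, Nat.cast_inj] at h2
    exact Nat.pow_right_injective (by norm_num) h2
  have h1 : Filter.Tendsto (fun j : ℕ =>
      ‖fourierCoeff lacunaryHalf ((2:ℤ)^j)‖ ^ 2 * |(((2:ℤ)^j : ℤ) : ℝ)|)
      Filter.cofinite (nhds 0) :=
    h0.comp hinj.tendsto_cofinite
  simp_rw [term_one] at h1
  have := tendsto_nhds_unique h1 tendsto_const_nhds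
  norm_num at this

local notation "r" => (2:ℝ)^(-(1:ℝ)/2)

lemma r_eq_inv_sqrt : r = (Real.sqrt 2)⁻¹ := by
  rw [Real.sqrt_eq_rpow, show (-(1:ℝ)/2) = -(1/2 : ℝ) by norm_num,
    Real.rpow_neg (by norm_num)]

lemma sqrt_pow_two_nat (n : ℕ) : Real.sqrt ((2:ℝ)^n) = (Real.sqrt 2)^n := by
  induction n with
  | zero => simp
  | succ n ih => rw [pow_succ, Real.sqrt_mul (by positivity), ih, pow_succ]

lemma one_lt_sqrt_two : 1 < Real.sqrt 2 := by
  have : Real.sqrt 1 < Real.sqrt 2 := Real.sqrt_lt_sqrt (by norm_num) (by norm_num)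
  simpa using this

lemma summable_min (d : ℝ) (hd : 0 ≤ d) :
    Summable (fun k : ℕ => r^k * min 2 ((2:ℝ)^k * d)) := by
  apply Summable.of_nonneg_of_le
  · intro k
    have : (0:ℝ) ≤ min 2 ((2:ℝ)^k * d) := le_min (by norm_num) (by positivity)
    positivity
  · intro k
    have h1 : min 2 ((2:ℝ)^k * d) ≤ 2 := min_le_left _ _
    have := pow_nonneg r_pos.le k
    calc r^k * min 2 ((2:ℝ)^k * d) ≤ r^k * 2 := by nlinarith
      _ = 2 * r^k := by ring
  · exact summable_r.mul_left 2

lemma sum_min_bound (d : ℝ) (hd : 0 ≤ d) :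
    ∑' k : ℕ, r^k * min 2 ((2:ℝ)^k * d)
      ≤ (Real.sqrt 2 / (Real.sqrt 2 - 1) + 2 / (1 - r)) * Real.sqrt d := by
  set s := Real.sqrt 2 with hs
  have hs1 : 1 < s := _root_.one_lt_sqrt_two
  have hr1 : r < 1 := r_lt_one
  have hr0 : 0 < r := r_pos
  have hC2 : 0 < 2 / (1 - r) := div_pos two_pos (by linarith)
  have hC1 : 0 ≤ s / (s - 1) := le_of_lt (div_pos (by linarith) (by linarith))
  rcases eq_or_lt_of_le hd with hd0 | hd0
  · rw [← hd0]
    have e : (fun k : ℕ => r^k * min 2 ((2:ℝ)^k * 0)) = fun _ => (0:ℝ) := by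
      funext k
      rw [mul_zero, min_eq_right (by norm_num : (0:ℝ) ≤ 2), mul_zero]
    rw [e, tsum_zero, Real.sqrt_zero, mul_zero]
  rcases le_or_gt 1 d with hd1 | hd1
  · -- d ≥ 1 : crude bound
    have hsd : 1 ≤ Real.sqrt d := by
      rw [show (1:ℝ) = Real.sqrt 1 by simp]
      exact Real.sqrt_le_sqrt hd1
    have hb : ∑' k : ℕ, r^k * min 2 ((2:ℝ)^k * d) ≤ 2 / (1 - r) := by
      calc ∑' k : ℕ, r^k * min 2 ((2:ℝ)^k * d) ≤ ∑' k : ℕ, 2 * r^k := by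
            apply Summable.tsum_le_tsum _ (summable_min d hd) (summable_r.mul_left 2)
            intro k
            have h1 : min 2 ((2:ℝ)^k * d) ≤ 2 := min_le_left _ _
            have := pow_nonneg hr0.le k
            nlinarith
        _ = 2 * (1 - r)⁻¹ := by rw [tsum_mul_left, tsum_geometric_of_lt_one hr0.le hr1]
        _ = 2 / (1 - r) := by ring
    calc ∑' k : ℕ, r^k * min 2 ((2:ℝ)^k * d) ≤ 2 / (1 - r) := hb
      _ ≤ 2 / (1 - r) * Real.sqrt d := by nlinarith
      _ ≤ (s / (s - 1) + 2 / (1 - r)) * Real.sqrt d := by nlinarith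
  · -- 0 < d < 1
    set N := ⌊1/d⌋₊ with hN
    have hN1 : 1 ≤ N := by
      rw [hN, Nat.le_floor_iff (by positivity)]
      push_cast
      rw [le_div_iff₀ hd0]
      linarith
    set K := Nat.log 2 N with hK
    have hlow : ((2:ℝ))^K ≤ 1/d := by
      have h1 : 2^K ≤ N := Nat.pow_log_le_self 2 (by omega)
      have h2 : (N : ℝ) ≤ 1/d := Nat.floor_le (by positivity)
      calc ((2:ℝ))^K = ((2^K : ℕ) : ℝ) := by push_cast; ring
        _ ≤ (N : ℝ) := by exact_mod_cast h1
        _ ≤ 1/d := h2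
    have hhigh : 1/d < ((2:ℝ))^(K+1) := by
      have h1 : N < 2^(K+1) := Nat.lt_pow_succ_log_self (by norm_num) N
      have h2 : 1/d < (N : ℝ) + 1 := Nat.lt_floor_add_one _
      calc 1/d < (N : ℝ) + 1 := h2
        _ ≤ ((2^(K+1) : ℕ) : ℝ) := by exact_mod_cast h1
        _ = ((2:ℝ))^(K+1) := by push_cast; ring
    have hKd : (2:ℝ)^K * d ≤ 1 := by
      rw [← le_div_iff₀ hd0] at *
      exact hlow
    have hKd2 : 1 < (2:ℝ)^(K+1) * d := by
      rw [div_lt_iff₀ hd0] at hhigh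
      linarith [hhigh]
    -- split the sum
    rw [← Summable.sum_add_tsum_nat_add (K+1) (summable_min d hd)]
    have hs0 : (0:ℝ) < s - 1 := by linarith
    have hsqd : 0 ≤ Real.sqrt d := Real.sqrt_nonneg d
    have key : s^(K+1) * d ≤ s * Real.sqrt d := by
      rw [← sqrt_pow_two_nat]
      have h1 : Real.sqrt ((2:ℝ)^(K+1)) * d
          = Real.sqrt d * Real.sqrt ((2:ℝ)^(K+1) * d) := by
        have hd' : Real.sqrt d * Real.sqrt d = d := Real.mul_self_sqrt hd
        rw [Real.sqrt_mul (by positivity) d]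
        linear_combination (-(Real.sqrt ((2:ℝ)^(K+1)))) * (Real.sq_sqrt hd)
      rw [h1]
      have h2 : Real.sqrt ((2:ℝ)^(K+1) * d) ≤ s := by
        rw [hs]
        apply Real.sqrt_le_sqrt
        have : (2:ℝ)^(K+1) * d = 2 * ((2:ℝ)^K * d) := by ring
        rw [this]; linarith
      calc Real.sqrt d * Real.sqrt ((2:ℝ)^(K+1) * d) ≤ Real.sqrt d * s := by nlinarith
        _ = s * Real.sqrt d := by ring
    have head : ∑ k ∈ Finset.range (K+1), r^k * min 2 ((2:ℝ)^k * d)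
        ≤ s / (s - 1) * Real.sqrt d := by
      have step1 : ∑ k ∈ Finset.range (K+1), r^k * min 2 ((2:ℝ)^k * d)
          ≤ ∑ k ∈ Finset.range (K+1), s^k * d := by
        apply Finset.sum_le_sum
        intro k _
        have h2 : r^k * ((2:ℝ)^k * d) = s^k * d := by
          rw [← mul_assoc, ← mul_pow]
          congr 2
          rw [r_eq_inv_sqrt]
          have h3 : Real.sqrt 2 * Real.sqrt 2 = 2 := Real.mul_self_sqrt (by norm_num)
          field_simp
          rw [hs, h3]
        have h1 : min 2 ((2:ℝ)^k * d) ≤ (2:ℝ)^k * d := min_le_right _ _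
        calc r^k * min 2 ((2:ℝ)^k * d) ≤ r^k * ((2:ℝ)^k * d) := by
              have := pow_nonneg hr0.le k; nlinarith
          _ = s^k * d := h2
      have step2 : ∑ k ∈ Finset.range (K+1), s^k * d = (s^(K+1) - 1)/(s - 1) * d := by
        rw [← Finset.sum_mul, geom_sum_eq (by linarith)]
      have step3 : (s^(K+1) - 1)/(s - 1) * d ≤ s^(K+1)/(s-1) * d := by
        gcongr
        · linarith
      have step4 : s^(K+1)/(s-1) * d ≤ s / (s - 1) * Real.sqrt d := by
        rw [div_mul_eq_mul_div, div_mul_eq_mul_div]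
        exact (div_le_div_iff_of_pos_right hs0).mpr key
      linarith
    have tail : ∑' k : ℕ, r^(k+(K+1)) * min 2 ((2:ℝ)^(k+(K+1)) * d)
        ≤ 2 / (1 - r) * Real.sqrt d := by
      have hrK : r^(K+1) ≤ Real.sqrt d := by
        have e1 : r^(K+1) = (Real.sqrt ((2:ℝ)^(K+1)))⁻¹ := by
          rw [r_eq_inv_sqrt, sqrt_pow_two_nat, inv_pow]
        rw [e1, ← Real.sqrt_inv]
        apply Real.sqrt_le_sqrt
        rw [inv_le_iff_one_le_mul₀ (by positivity)]
        nlinarith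
      have hb : ∀ k : ℕ, r^(k+(K+1)) * min 2 ((2:ℝ)^(k+(K+1)) * d)
          ≤ (2 * r^(K+1)) * r^k := by
        intro k
        have h1 : min 2 ((2:ℝ)^(k+(K+1)) * d) ≤ 2 := min_le_left _ _
        have h2 : (0:ℝ) ≤ min 2 ((2:ℝ)^(k+(K+1)) * d) := le_min (by norm_num) (by positivity)
        have h3 : r^(k+(K+1)) = r^k * r^(K+1) := pow_add r k (K+1)
        have h4 := pow_nonneg hr0.le k
        have h5 := pow_nonneg hr0.le (K+1)
        rw [h3]
        calc r^k * r^(K+1) * min 2 ((2:ℝ)^(k+(K+1)) * d)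
            ≤ r^k * r^(K+1) * 2 := mul_le_mul_of_nonneg_left h1 (mul_nonneg h4 h5)
          _ = (2 * r^(K+1)) * r^k := by ring
      calc ∑' k : ℕ, r^(k+(K+1)) * min 2 ((2:ℝ)^(k+(K+1)) * d)
          ≤ ∑' k : ℕ, (2 * r^(K+1)) * r^k := by
            apply Summable.tsum_le_tsum hb
            · exact ((summable_min d hd).comp_injective (add_left_injective (K+1)))
            · exact summable_r.mul_left _
        _ = (2 * r^(K+1)) * (1-r)⁻¹ := by
            rw [tsum_mul_left, tsum_geometric_of_lt_one hr0.le hr1]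
        _ ≤ 2 / (1 - r) * Real.sqrt d := by
            have h7 : (0:ℝ) < 1 - r := by linarith
            have e2 : (2 * r^(K+1)) * (1-r)⁻¹ = (2 * (1-r)⁻¹) * r^(K+1) := by ring
            have e3 : 2 / (1 - r) * Real.sqrt d = (2 * (1-r)⁻¹) * Real.sqrt d := by
              rw [div_eq_mul_inv]
            rw [e2, e3]
            have h6 : (0:ℝ) ≤ 2 * (1-r)⁻¹ := by positivity
            exact mul_le_mul_of_nonneg_left hrK h6
    linarith

lemma diff_bound (t₁ t₂ : AddCircle (2 * Real.pi)) :
    ‖lacunaryHalf t₁ - lacunaryHalf t₂‖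
      ≤ ∑' k : ℕ, r^k * min 2 ((2:ℝ)^k * dist t₁ t₂) := by
  set d := dist t₁ t₂ with hdd
  have hd : 0 ≤ d := dist_nonneg
  unfold lacunaryHalf
  rw [← Summable.tsum_sub (summable_term t₁) (summable_term t₂)]
  apply tsum_of_norm_bounded ((summable_min d hd).hasSum)
  intro k
  rw [← mul_sub, norm_mul, Complex.norm_real, Real.norm_eq_abs,
    abs_of_nonneg (Real.rpow_nonneg (by norm_num) _), c_eq]
  apply mul_le_mul_of_nonneg_left _ (pow_nonneg r_pos.le k)
  apply le_min
  · have h1 : ‖(fourier ((2:ℤ)^k) t₁ : ℂ)‖ = 1 := Circle.norm_coe _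
    have h2 : ‖(fourier ((2:ℤ)^k) t₂ : ℂ)‖ = 1 := Circle.norm_coe _
    calc ‖(fourier ((2:ℤ)^k) t₁ : ℂ) - fourier ((2:ℤ)^k) t₂‖
        ≤ ‖(fourier ((2:ℤ)^k) t₁ : ℂ)‖ + ‖(fourier ((2:ℤ)^k) t₂ : ℂ)‖ := norm_sub_le _ _
      _ = 2 := by rw [h1, h2]; norm_num
  · have := fourier_lip ((2:ℤ)^k) t₁ t₂
    have he : |(((2:ℤ)^k : ℤ) : ℝ)| = (2:ℝ)^k := by
      push_cast
      rw [abs_of_nonneg (by positivity)]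
    rw [he] at this
    exact this

/-- The function `f(t) = ∑_{k≥0} 2^{-k/2} e^{i 2^k t}` satisfies the Lipschitz condition of
order `1/2` but does not belong to `W_2^{1/2}(𝕋)`; in particular, `Lip_{1/2}(𝕋)` is not
contained in `W_2^{1/2}(𝕋)`. -/
theorem lacunaryHalf_lip_half_not_W_half :
    (∃ C : ℝ, ∀ t₁ t₂ : AddCircle (2 * Real.pi),
        ‖lacunaryHalf t₁ - lacunaryHalf t₂‖ ≤ C * dist t₁ t₂ ^ (1 / 2 : ℝ)) ∧
    ¬ Summable (fun k : ℤ => ‖fourierCoeff lacunaryHalf k‖ ^ 2 * |(k : ℝ)|) ∧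
    ¬ (∀ g : AddCircle (2 * Real.pi) → ℂ,
        (∃ C : ℝ, ∀ t₁ t₂ : AddCircle (2 * Real.pi),
          ‖g t₁ - g t₂‖ ≤ C * dist t₁ t₂ ^ (1 / 2 : ℝ)) →
        Summable (fun k : ℤ => ‖fourierCoeff g k‖ ^ 2 * |(k : ℝ)|)) := by
  have lip : ∃ C : ℝ, ∀ t₁ t₂ : AddCircle (2 * Real.pi),
      ‖lacunaryHalf t₁ - lacunaryHalf t₂‖ ≤ C * dist t₁ t₂ ^ (1 / 2 : ℝ) := by
    refine ⟨Real.sqrt 2 / (Real.sqrt 2 - 1) + 2 / (1 - r), fun t₁ t₂ => ?_⟩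
    rw [← Real.sqrt_eq_rpow]
    exact (diff_bound t₁ t₂).trans (sum_min_bound _ dist_nonneg)
  exact ⟨lip, not_summable_lacunary, fun h => not_summable_lacunary (h lacunaryHalf lip)⟩
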